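/- Let R be a von Neumann algebra acting on a complex Hilbert space, let τ be a normal tracial state on R, let H be a positive element of R, and let ε > 0 be such that τ(H) ≤ ε. Then there exists a projection E in R such that ‖HE‖ ≤ √ε and τ(1−E) ≤ √ε; that is, H ∈ O(τ, √ε, √ε). -/

import Mathlib

open ContinuousLinearMap
open scoped ComplexOrder

namespace Paper

variable {H : Type*} [NormedAddCommGroup H] [InnerProductSpace ℂ H] [CompleteSpace H]

/-- The Loewner order on bounded operators: `loe A B` iff `B - A` is a positive operator. -/
def loe (A B : H →L[ℂ] H) : Prop := (B - A).IsPositive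

/-- A projection in the von Neumann algebra `R`: a self-adjoint idempotent member of `R`. -/
def IsProjectionIn (R : VonNeumannAlgebra H) (E : H →L[ℂ] H) : Prop :=
  E ∈ R ∧ star E = E ∧ E * E = E

/-- A tracial state on `R`, given as a complex-valued function on bounded operators whose
state axioms are imposed on members of `R`. -/
structure IsTracialState (R : VonNeumannAlgebra H) (τ : (H →L[ℂ] H) → ℂ) : Prop where
  map_add : ∀ A B, A ∈ R → B ∈ R → τ (A + B) = τ A + τ B
  map_smul : ∀ (c : ℂ) (A), A ∈ R → τ (c • A) = c * τ A
  map_one : τ 1 = 1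
  nonneg : ∀ A, A ∈ R → 0 ≤ τ (star A * A)
  tracial : ∀ A B, A ∈ R → B ∈ R → τ (A * B) = τ (B * A)

/-- Normality of a functional `τ` on `R`: for every increasing net of projections in `R`
possessing a least upper bound in `R` for the Loewner order, `τ` of the least upper bound is
the supremum of the values of `τ` along the net. -/
def IsNormalOn (R : VonNeumannAlgebra H) (τ : (H →L[ℂ] H) → ℂ) : Prop :=
  ∀ (ι : Type) [Preorder ι] [IsDirected ι (· ≤ ·)] [Nonempty ι],
    ∀ (E : ι → H →L[ℂ] H) (Elub : H →L[ℂ] H),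
      (∀ i, IsProjectionIn R (E i)) →
      (∀ i j, i ≤ j → loe (E i) (E j)) →
      Elub ∈ R →
      (∀ i, loe (E i) Elub) →
      (∀ F, F ∈ R → (∀ i, loe (E i) F) → loe Elub F) →
      IsLUB (Set.range fun i => (τ (E i)).re) (τ Elub).re

/-- A normal tracial state on `R`. -/
def IsNormalTracialState (R : VonNeumannAlgebra H) (τ : (H →L[ℂ] H) → ℂ) : Prop :=
  IsTracialState R τ ∧ IsNormalOn R τ

/-- Faithfulness of a state on `R`. -/
def IsFaithfulOn (R : VonNeumannAlgebra H) (τ : (H →L[ℂ] H) → ℂ) : Prop :=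
  ∀ A, A ∈ R → τ (star A * A) = 0 → A = 0

/-- The neighborhood `O(τ, ε, δ)` of `0` in `R` for the measure topology. -/
def O (R : VonNeumannAlgebra H) (τ : (H →L[ℂ] H) → ℂ) (ε δ : ℝ) : Set (H →L[ℂ] H) :=
  {A | A ∈ R ∧ ∃ E, IsProjectionIn R E ∧ ‖A * E‖ ≤ ε ∧ τ (1 - E) ≤ (δ : ℂ)}

/-- The neighborhood `V(τ, ε, δ)` of `0` in `H` for the measure topology. -/
def V (R : VonNeumannAlgebra H) (τ : (H →L[ℂ] H) → ℂ) (ε δ : ℝ) : Set H :=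
  {x | ∃ E, IsProjectionIn R E ∧ ‖E x‖ ≤ ε ∧ τ (1 - E) ≤ (δ : ℂ)}

/-- The normal tracial states of `R` separate points: every nonzero positive element of `R`
is detected by some normal tracial state. -/
def SeparatingNormalTracialStates (R : VonNeumannAlgebra H) : Prop :=
  ∀ A : H →L[ℂ] H, A ∈ R → A.IsPositive → A ≠ 0 →
    ∃ τ, IsNormalTracialState R τ ∧ τ A ≠ 0


open scoped InnerProductSpace

lemma isClosed_centralizer (s : Set (H →L[ℂ] H)) : IsClosed (Set.centralizer s) := by
  have : Set.centralizer s = ⋂ g ∈ s, {x : H →L[ℂ] H | g * x = x * g} := by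
    ext x; simp [Set.mem_centralizer_iff]
  rw [this]
  exact isClosed_biInter fun g _ => isClosed_eq (continuous_mul_left g) (continuous_mul_right g)

lemma cfc_mem_vN (R : VonNeumannAlgebra H) {A : H →L[ℂ] H} (hAR : A ∈ R)
    (hA : IsSelfAdjoint A) (f : ℝ → ℝ) : cfc f A ∈ R := by
  by_cases hf : ContinuousOn f (spectrum ℝ A)
  · rw [cfc_real_eq_complex f hA]
    set g : ℂ → ℂ := fun x => (f x.re : ℂ) with hg
    have hgc : ContinuousOn g (spectrum ℂ A) := by
      apply Complex.continuous_ofReal.comp_continuousOn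
      apply hf.comp Complex.continuous_re.continuousOn
      intro z hz
      exact hA.spectrumRestricts.apply_mem hz
    have hmem : cfc g A ∈ StarAlgebra.elemental ℂ A := by
      have := hA.isStarNormal
      rw [cfc_apply g A this hgc, cfcHom_eq_of_isStarNormal]
      exact ((continuousFunctionalCalculus A) ⟨_, hgc.restrict⟩).2
    set s : Set (H →L[ℂ] H) := Set.centralizer (R : Set (H →L[ℂ] H))
    have hsub : (StarAlgebra.elemental ℂ A : Set (H →L[ℂ] H)) ⊆
        (StarSubalgebra.centralizer ℂ s : Set (H →L[ℂ] H)) := by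
      apply StarAlgebra.elemental.le_of_mem
      · exact isClosed_centralizer _
      · rw [StarSubalgebra.mem_centralizer_iff]
        intro g hgs
        have hstar : ∀ a ∈ s, star a ∈ s := fun a ha =>
          Set.star_mem_centralizer' (fun b hb => star_mem hb) ha
        have hAc : A ∈ Set.centralizer s := by
          show A ∈ Set.centralizer (Set.centralizer (R : Set (H →L[ℂ] H)))
          rw [R.centralizer_centralizer]; exact hAR
        exact ⟨hAc g hgs, hAc (star g) (hstar g hgs)⟩
    have : cfc g A ∈ Set.centralizer (Set.centralizer (R : Set (H →L[ℂ] H))) := by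
      have h2 := hsub hmem
      rw [StarSubalgebra.coe_centralizer] at h2
      exact Set.centralizer_subset Set.subset_union_left h2
    rwa [R.centralizer_centralizer] at this
  · rw [cfc_apply_of_not_continuousOn A hf]
    exact zero_mem R.toStarSubalgebra

lemma tau_nonneg (R : VonNeumannAlgebra H) (τ : (H →L[ℂ] H) → ℂ)
    (hτ : IsTracialState R τ) {P : H →L[ℂ] H} (hPR : P ∈ R) (hP : P.IsPositive) : 0 ≤ τ P := by
  have hP0 : (0 : H →L[ℂ] H) ≤ P := (ContinuousLinearMap.nonneg_iff_isPositive P).mpr hP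
  have hsa : IsSelfAdjoint P := hP.isSelfAdjoint
  set Q : H →L[ℂ] H := cfc Real.sqrt P with hQ
  have hQsa : IsSelfAdjoint Q := cfc_predicate Real.sqrt P
  have hQR : Q ∈ R := cfc_mem_vN R hPR hsa Real.sqrt
  have hQQ : Q * Q = P := by
    rw [hQ, ← cfc_mul Real.sqrt Real.sqrt P]
    have : cfc (fun t => Real.sqrt t * Real.sqrt t) P = cfc (id : ℝ → ℝ) P := by
      apply cfc_congr
      intro t ht
      exact Real.mul_self_sqrt (spectrum_nonneg_of_nonneg hP0 ht)
    rw [this, cfc_id ℝ P]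
  have := hτ.nonneg Q hQR
  rwa [hQsa.star_eq, hQQ] at this

/-- A positive operator of small trace is in a small basic neighborhood:
if `τ(A) ≤ ε` then `A ∈ O(τ, √ε, √ε)`. -/
theorem statement13 (R : VonNeumannAlgebra H) (τ : (H →L[ℂ] H) → ℂ)
    (hτ : IsNormalTracialState R τ) (A : H →L[ℂ] H) (hAR : A ∈ R)
    (hA : A.IsPositive) (ε : ℝ) (hε : 0 < ε) (hτA : τ A ≤ (ε : ℂ)) :
    A ∈ O R τ (Real.sqrt ε) (Real.sqrt ε) := by
  set s : ℝ := Real.sqrt ε with hs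
  have hs0 : 0 < s := Real.sqrt_pos.mpr hε
  have hss : s * s = ε := Real.mul_self_sqrt hε.le
  have hA0 : (0 : H →L[ℂ] H) ≤ A := (ContinuousLinearMap.nonneg_iff_isPositive A).mpr hA
  have hsa : IsSelfAdjoint A := hA.isSelfAdjoint
  have hspec : ∀ t ∈ spectrum ℝ A, 0 ≤ t := spectrum_nonneg_of_nonneg hA0
  set f : ℝ → ℝ := fun t => max (t - s) 0 with hf
  set g : ℝ → ℝ := fun t => min t s with hg
  have hfc : Continuous f := (continuous_id.sub continuous_const).max continuous_const
  have hgc : Continuous g := continuous_id.min continuous_const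
  set B : H →L[ℂ] H := cfc f A with hB
  set C : H →L[ℂ] H := cfc g A with hC
  have hBsa : IsSelfAdjoint B := cfc_predicate f A
  have hBR : B ∈ R := cfc_mem_vN R hAR hsa f
  have hsplit : A = C + B := by
    rw [hB, hC, ← cfc_add A g f]
    conv_lhs => rw [← cfc_id ℝ A]
    apply cfc_congr
    intro t _
    rcases le_total t s with h | h
    · simp [hf, hg, min_eq_left h, max_eq_right (sub_nonpos.mpr h)]
    · simp [hf, hg, min_eq_right h, max_eq_left (sub_nonneg.mpr h)]
  -- the kernel of B
  set K : Submodule ℂ H := LinearMap.ker (B : H →ₗ[ℂ] H) with hK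
  haveI : CompleteSpace K := (ContinuousLinearMap.isClosed_ker B).completeSpace_coe
  set E : H →L[ℂ] H := K.subtypeL.comp (K.orthogonalProjection) with hE
  have hEapp : ∀ x, E x = (K.orthogonalProjection x : H) := fun x => rfl
  have hEsa : IsSelfAdjoint E := isSelfAdjoint_starProjection K
  have hEmem : ∀ x, E x ∈ K := fun x => (K.orthogonalProjection x).2
  have hEfix : ∀ x ∈ K, E x = x := by
    intro x hx
    exact Submodule.starProjection_eq_self_iff.mpr hx
  have hEE : E * E = E := by
    ext x
    exact (ContinuousLinearMap.mul_apply _ _ _).trans (hEfix _ (hEmem x))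
  have hBE : B * E = 0 := by
    ext x
    exact (ContinuousLinearMap.mul_apply _ _ _).trans (hEmem x)
  have hBsym : ∀ x y : H, ⟪B x, y⟫_ℂ = ⟪x, B y⟫_ℂ :=
    (ContinuousLinearMap.isSelfAdjoint_iff_isSymmetric.mp hBsa)
  -- E is in R
  have hER : E ∈ R := by
    have hcomm : ∀ T ∈ Set.centralizer (R : Set (H →L[ℂ] H)), T * E = E * T := by
      intro T hT
      have hTstar : star T ∈ Set.centralizer (R : Set (H →L[ℂ] H)) :=
        Set.star_mem_centralizer' (fun b hb => star_mem hb) hT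
      have hTK : ∀ x ∈ K, T x ∈ K := by
        intro x hx
        have hx' : B x = 0 := hx
        have : B (T x) = T (B x) := by
          rw [← ContinuousLinearMap.mul_apply, hT B hBR, ContinuousLinearMap.mul_apply]
        show B (T x) = 0
        rw [this, hx', map_zero]
      have hTsK : ∀ x ∈ K, star T x ∈ K := by
        intro x hx
        have hx' : B x = 0 := hx
        have : B (star T x) = star T (B x) := by
          rw [← ContinuousLinearMap.mul_apply, hTstar B hBR, ContinuousLinearMap.mul_apply]
        show B (star T x) = 0
        rw [this, hx', map_zero]
      have h1 : E * (T * E) = T * E := by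
        ext x
        simp only [ContinuousLinearMap.mul_apply]
        exact hEfix _ (hTK _ (hEmem x))
      have h2 : E * (star T * E) = star T * E := by
        ext x
        simp only [ContinuousLinearMap.mul_apply]
        exact hEfix _ (hTsK _ (hEmem x))
      have h3 := congrArg star h2
      simp only [star_mul, star_star, hEsa.star_eq] at h3
      -- h3 : (E * T) * E = E * T
      calc T * E = E * (T * E) := h1.symm
        _ = (E * T) * E := by rw [mul_assoc]
        _ = E * T := h3
    have : E ∈ Set.centralizer (Set.centralizer (R : Set (H →L[ℂ] H))) := by
      intro T hT
      exact hcomm T hT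
    rwa [R.centralizer_centralizer] at this
  -- norm bound
  have hCnorm : ‖C‖ ≤ s := by
    apply norm_cfc_le hs0.le
    intro t ht
    rw [Real.norm_eq_abs, abs_le]
    constructor
    · have := hspec t ht
      have : (0:ℝ) ≤ min t s := le_min this hs0.le
      linarith
    · exact min_le_right t s
  have hEnorm : ‖E‖ ≤ 1 := by
    apply ContinuousLinearMap.opNorm_le_bound _ zero_le_one
    intro x
    rw [one_mul, hEapp]
    have h1 : ‖(K.orthogonalProjection x : H)‖ = ‖K.orthogonalProjection x‖ := rfl
    rw [h1]
    calc ‖K.orthogonalProjection x‖ ≤ ‖K.orthogonalProjection‖ * ‖x‖ :=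
          (K.orthogonalProjection).le_opNorm x
      _ ≤ 1 * ‖x‖ := by
          apply mul_le_mul_of_nonneg_right K.orthogonalProjectionOnto_norm_le (norm_nonneg x)
      _ = ‖x‖ := one_mul _
  have hAE : ‖A * E‖ ≤ s := by
    have : A * E = C * E := by
      rw [hsplit, add_mul, hBE, add_zero]
    rw [this]
    calc ‖C * E‖ ≤ ‖C‖ * ‖E‖ := norm_mul_le C E
      _ ≤ s * 1 := mul_le_mul hCnorm hEnorm (norm_nonneg E) hs0.le
      _ = s := mul_one s
  -- key spectral inequality on the orthocomplement of K
  have hcommAB : A * B = B * A := by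
    have := cfc_commute_cfc (id : ℝ → ℝ) f A
    rwa [cfc_id ℝ A] at this
  have hkey : ∀ y ∈ Kᗮ, s * ‖y‖ ^ 2 ≤ Complex.re ⟪A y, y⟫_ℂ := by
    have hKorth : Kᗮ = (LinearMap.range (B : H →ₗ[ℂ] H)).topologicalClosure := by
      have hker : K = (LinearMap.range (B : H →ₗ[ℂ] H))ᗮ := by
        ext x
        rw [Submodule.mem_orthogonal]
        constructor
        · intro hx u hu
          obtain ⟨z, rfl⟩ := hu
          have hx' : B x = 0 := hx
          rw [ContinuousLinearMap.coe_coe, hBsym, hx', inner_zero_right]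
        · intro h
          have := h (B (B x)) ⟨B x, rfl⟩
          rw [hBsym] at this
          have h0 : ⟪B x, B x⟫_ℂ = 0 := this
          exact inner_self_eq_zero.mp h0
      rw [hker, Submodule.orthogonal_orthogonal_eq_closure]
    intro y hy
    rw [hKorth] at hy
    have hy' : y ∈ closure ((LinearMap.range (B : H →ₗ[ℂ] H) : Submodule ℂ H) : Set H) := hy
    -- D = B (A - s) B is positive
    set D : H →L[ℂ] H := cfc (fun t => f t * ((t - s) * f t)) A with hD
    have hD0 : (0 : H →L[ℂ] H) ≤ D := by
      apply cfc_nonneg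
      intro t _
      rcases le_total t s with h | h
      · simp [hf, max_eq_right (sub_nonpos.mpr h)]
      · have h1 : 0 ≤ t - s := sub_nonneg.mpr h
        have h2 : f t = t - s := max_eq_left h1
        rw [h2]
        positivity
    have hDpos : D.IsPositive := (ContinuousLinearMap.nonneg_iff_isPositive D).mp hD0
    have hmid : cfc (fun t : ℝ => t - s) A = A - s • 1 := by
      rw [cfc_sub (fun t => t) (fun _ => s) A, cfc_id' ℝ A, cfc_const s A,
        Algebra.algebraMap_eq_smul_one]
    have hDeq : D = B * ((A - s • 1) * B) := by
      rw [hD, cfc_mul f (fun t => (t - s) * f t) A, cfc_mul (fun t => t - s) f A, hmid]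
    -- closed set argument
    have hclosed : IsClosed {y : H | s * ‖y‖ ^ 2 ≤ Complex.re ⟪A y, y⟫_ℂ} := by
      apply isClosed_le
      · exact (continuous_const.mul ((continuous_norm).pow 2))
      · exact A.reApplyInnerSelf_continuous
    have hsub : ((LinearMap.range (B : H →ₗ[ℂ] H) : Submodule ℂ H) : Set H) ⊆
        {y : H | s * ‖y‖ ^ 2 ≤ Complex.re ⟪A y, y⟫_ℂ} := by
      rintro _ ⟨z, rfl⟩
      have h1 : 0 ≤ Complex.re ⟪D z, z⟫_ℂ := hDpos.re_inner_nonneg_left z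
      have h2 : ⟪D z, z⟫_ℂ = ⟪(A - s • 1) (B z), B z⟫_ℂ := by
        rw [hDeq]
        simp only [ContinuousLinearMap.mul_apply]
        rw [hBsym]
      have hsmulw : ∀ w : H, (s : ℝ) • w = ((s : ℂ)) • w := by
        intro w
        rw [← smul_one_smul ℂ s w]
        norm_num
      have h3 : ⟪(A - s • 1) (B z), B z⟫_ℂ = ⟪A (B z), B z⟫_ℂ - (s : ℂ) * ⟪B z, B z⟫_ℂ := by
        rw [ContinuousLinearMap.sub_apply, inner_sub_left]
        congr 1
        rw [ContinuousLinearMap.smul_apply, ContinuousLinearMap.one_apply, hsmulw,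
          inner_smul_left, Complex.conj_ofReal]
      rw [h2, h3] at h1
      have h4 : Complex.re ((s:ℂ) * ⟪B z, B z⟫_ℂ) = s * ‖B z‖ ^ 2 := by
        rw [inner_self_eq_norm_sq_to_K]
        norm_num [← Complex.ofReal_pow]
      simp only [Complex.sub_re] at h1
      rw [h4] at h1
      show s * ‖B z‖ ^ 2 ≤ (⟪A (B z), B z⟫_ℂ).re
      linarith
    exact (hclosed.closure_subset_iff.mpr hsub) hy'
  -- positivity of A - s(1-E)
  set F : H →L[ℂ] H := 1 - E with hF
  have hFsa : IsSelfAdjoint F := by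
    rw [hF]
    exact (IsSelfAdjoint.one (R := H →L[ℂ] H)).sub hEsa
  have hFR : F ∈ R := sub_mem (one_mem R.toStarSubalgebra) hER
  have hFF : F * F = F := by
    rw [hF]
    rw [sub_mul, mul_sub, mul_sub, one_mul, mul_one, hEE]
    abel
  set P : H →L[ℂ] H := A - (s : ℂ) • F with hP
  have hsmul_eq : (s : ℂ) • F = s • F := by
    rw [← smul_one_smul ℂ s F]
    norm_num
  have hPpos : P.IsPositive := by
    refine isPositive_def'.mpr ⟨?_, ?_⟩
    · rw [hP]
      apply IsSelfAdjoint.sub hsa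
      rw [IsSelfAdjoint, star_smul, hFsa.star_eq]
      congr 1
      simp [Complex.star_def, Complex.conj_ofReal]
    · intro x
      show (0:ℝ) ≤ (⟪P x, x⟫_ℂ).re
      set u : H := E x with hu
      set v : H := x - E x with hv
      have huK : u ∈ K := hEmem x
      have hvK : v ∈ Kᗮ := by
        rw [hv, hEapp]
        exact Submodule.sub_starProjection_mem_orthogonal x
      have hxuv : x = u + v := by rw [hu, hv]; abel
      have hAuK : A u ∈ K := by
        have hu' : B u = 0 := huK
        show B (A u) = 0
        rw [← ContinuousLinearMap.mul_apply, ← hcommAB, ContinuousLinearMap.mul_apply, hu',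
          map_zero]
      have hFx : F x = v := by
        rw [hF, hv, ContinuousLinearMap.sub_apply, ContinuousLinearMap.one_apply]
      have hinner_uv : ⟪A u, v⟫_ℂ = 0 := (Submodule.mem_orthogonal K v).mp hvK _ hAuK
      have hinner_vu : ⟪A v, u⟫_ℂ = 0 := by
        have hsym : ∀ x y : H, ⟪A x, y⟫_ℂ = ⟪x, A y⟫_ℂ :=
          (ContinuousLinearMap.isSelfAdjoint_iff_isSymmetric.mp hsa)
        rw [hsym]
        exact (Submodule.mem_orthogonal' K v).mp hvK _ hAuK
      have hinner_vu2 : ⟪v, u⟫_ℂ = 0 := (Submodule.mem_orthogonal' K v).mp hvK _ huK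
      have hPx : ⟪P x, x⟫_ℂ = ⟪A x, x⟫_ℂ - (s:ℂ) * ⟪v, x⟫_ℂ := by
        rw [hP, ContinuousLinearMap.sub_apply, inner_sub_left, ContinuousLinearMap.smul_apply,
          inner_smul_left, hFx]
        congr 2
        simp [Complex.star_def, Complex.conj_ofReal]
      have hAx : ⟪A x, x⟫_ℂ = ⟪A u, u⟫_ℂ + ⟪A v, v⟫_ℂ := by
        conv_lhs => rw [hxuv]
        rw [map_add, inner_add_left, inner_add_right, inner_add_right, hinner_uv, hinner_vu]
        ring
      have hvx : ⟪v, x⟫_ℂ = ⟪v, v⟫_ℂ := by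
        conv_lhs => rw [hxuv]
        rw [inner_add_right, hinner_vu2, zero_add]
      rw [hPx, hAx, hvx]
      have h5 : Complex.re ((s:ℂ) * ⟪v, v⟫_ℂ) = s * ‖v‖ ^ 2 := by
        rw [inner_self_eq_norm_sq_to_K]
        norm_num [← Complex.ofReal_pow]
      simp only [Complex.sub_re, Complex.add_re, h5]
      have h6 := hkey v hvK
      have h7 : 0 ≤ Complex.re ⟪A u, u⟫_ℂ := hA.re_inner_nonneg_left u
      linarith
  -- trace estimates
  have hsF_R : (s : ℂ) • F ∈ R := R.toStarSubalgebra.smul_mem hFR _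
  have hPR : P ∈ R := sub_mem hAR hsF_R
  have hτP : 0 ≤ τ P := tau_nonneg R τ hτ.1 hPR hPpos
  have hτF0 : 0 ≤ τ F := by
    have := hτ.1.nonneg F hFR
    rwa [hFsa.star_eq, hFF] at this
  have hτadd : τ A = τ P + τ ((s : ℂ) • F) := by
    have h := hτ.1.map_add P ((s : ℂ) • F) hPR hsF_R
    have hPF : P + (s : ℂ) • F = A := by rw [hP]; abel
    rw [hPF] at h
    exact h
  have hτsF : τ ((s : ℂ) • F) = (s : ℂ) * τ F := hτ.1.map_smul _ _ hFR
  have hbound : (s : ℂ) * τ F ≤ (ε : ℂ) := by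
    calc (s : ℂ) * τ F = τ A - τ P := by rw [hτadd, hτsF]; ring
      _ ≤ τ A := by
          rw [sub_le_iff_le_add]
          exact le_add_of_nonneg_right hτP
      _ ≤ (ε : ℂ) := hτA
  have hτFim : (τ F).im = 0 := by
    rw [Complex.le_def] at hτF0
    exact hτF0.2.symm
  have hτFre : 0 ≤ (τ F).re := by
    rw [Complex.le_def] at hτF0
    simpa using hτF0.1
  have hre : s * (τ F).re ≤ ε := by
    rw [Complex.le_def] at hbound
    have := hbound.1
    simpa [Complex.re_ofReal_mul] using this
  have hτFle : (τ F).re ≤ s := by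
    by_contra hcon
    push_neg at hcon
    have : s * s < s * (τ F).re := by
      exact mul_lt_mul_of_pos_left hcon hs0
    rw [hss] at this
    linarith
  have hτFfinal : τ F ≤ (s : ℂ) := by
    rw [Complex.le_def]
    constructor
    · simpa using hτFle
    · simp [hτFim]
  exact ⟨hAR, E, ⟨hER, hEsa.star_eq, hEE⟩, hAE, hτFfinal⟩

end Paper
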